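/- Let G = (V,E) be a graph and let G' be obtained from G by adding a clique C on k−1 new vertices all adjacent to every vertex of V, a new vertex v adjacent to all of C, and a new pendant vertex u adjacent only to v. Then G has a vertex-edge dominating set of size at most t if and only if G' has a k-vertex-edge dominating set of size at most t + k. -/

import Mathlib

def closedNbr {V : Type*} (G : SimpleGraph V) (v : V) : Set V :=
  insert v (G.neighborSet v)

def kVEDom {V : Type*} (G : SimpleGraph V) (k : ℕ) (D : Set V) : Prop :=
  ∀ u v : V, G.Adj u v → k ≤ ((closedNbr G u ∪ closedNbr G v) ∩ D).ncard

/-- The graph `G′` obtained from `G` by adding a clique `C` on `k-1` new vertices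
(`Sum.inr (Sum.inl _)`) joined to all of `V`, a new vertex `v = Sum.inr (Sum.inr 0)`
joined to all of `C`, and a pendant vertex `u = Sum.inr (Sum.inr 1)` joined to `v`. -/
def extGraph {V : Type*} (G : SimpleGraph V) (k : ℕ) :
    SimpleGraph (V ⊕ (Fin (k - 1) ⊕ Fin 2)) :=
  SimpleGraph.fromRel (fun a b =>
    match a, b with
    | .inl x, .inl y => G.Adj x y
    | .inl _, .inr (.inl _) => True
    | .inr (.inl _), .inr (.inl _) => True
    | .inr (.inl _), .inr (.inr j) => j = 0
    | .inr (.inr i), .inr (.inr j) => i = 0 ∧ j = 1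
    | _, _ => False)

section Aux

variable {V : Type*} {G : SimpleGraph V} {k : ℕ}

lemma ext_adj_inl_inl {x y : V} (h : G.Adj x y) :
    (extGraph G k).Adj (.inl x) (.inl y) := by
  rw [extGraph, SimpleGraph.fromRel_adj]
  exact ⟨by simp [h.ne], Or.inl h⟩

lemma ext_adj_inl_inr (x : V) (c : Fin (k-1)) :
    (extGraph G k).Adj (.inl x) (.inr (.inl c)) := by
  rw [extGraph, SimpleGraph.fromRel_adj]
  exact ⟨by simp, Or.inl trivial⟩

lemma ext_adj_cc {c c' : Fin (k-1)} (h : c ≠ c') :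
    (extGraph G k).Adj (.inr (.inl c)) (.inr (.inl c')) := by
  rw [extGraph, SimpleGraph.fromRel_adj]
  exact ⟨by simp [h], Or.inl trivial⟩

lemma ext_adj_cv (c : Fin (k-1)) :
    (extGraph G k).Adj (.inr (.inl c)) (.inr (.inr 0)) := by
  rw [extGraph, SimpleGraph.fromRel_adj]
  exact ⟨by simp, Or.inl rfl⟩

lemma ext_adj_vu : (extGraph G k).Adj (.inr (.inr 0)) (.inr (.inr 1)) := by
  rw [extGraph, SimpleGraph.fromRel_adj]
  exact ⟨by simp, Or.inl ⟨rfl, rfl⟩⟩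

/-- neighbors of `inl x` are `inl` of `G`-neighbors or clique vertices. -/
lemma ext_adj_inl {x : V} {z : V ⊕ (Fin (k-1) ⊕ Fin 2)}
    (h : (extGraph G k).Adj (.inl x) z) :
    (∃ w, z = .inl w ∧ G.Adj x w) ∨ ∃ c, z = .inr (.inl c) := by
  rw [extGraph, SimpleGraph.fromRel_adj] at h
  obtain ⟨-, h⟩ := h
  match z with
  | .inl w => exact Or.inl ⟨w, rfl, h.elim id fun h' => h'.symm⟩
  | .inr (.inl c) => exact Or.inr ⟨c, rfl⟩
  | .inr (.inr j) => simp at h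

/-- neighbors of `inr (inr j)` are not of the form `inl`. -/
lemma ext_adj_inr_inr {j : Fin 2} {z : V ⊕ (Fin (k-1) ⊕ Fin 2)}
    (h : (extGraph G k).Adj (.inr (.inr j)) z) : z ∈ Set.range Sum.inr := by
  rw [extGraph, SimpleGraph.fromRel_adj] at h
  obtain ⟨-, h⟩ := h
  match z with
  | .inl w => simp at h
  | .inr w => exact ⟨w, rfl⟩

end Aux

/-- `G` has a vertex-edge dominating set of size at most `t` iff `G′` has a
k-vertex-edge dominating set of size at most `t + k`. -/
theorem ve_dom_iff_kve_dom_ext {V : Type*} [Fintype V] (G : SimpleGraph V)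
    (k t : ℕ) (hk : 2 ≤ k) :
    (∃ D : Set V, kVEDom G 1 D ∧ D.ncard ≤ t) ↔
      (∃ D' : Set (V ⊕ (Fin (k - 1) ⊕ Fin 2)),
        kVEDom (extGraph G k) k D' ∧ D'.ncard ≤ t + k) := by
  classical
  set W := V ⊕ (Fin (k-1) ⊕ Fin 2) with hW
  set Cset : Set W := Set.range (fun c : Fin (k-1) => Sum.inr (Sum.inl c)) with hCset
  have hCcard : Cset.ncard = k - 1 := by
    rw [hCset, ← Set.image_univ,
      Set.ncard_image_of_injective _ (fun a b h => Sum.inl_injective (Sum.inr_injective h)), Set.ncard_univ]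
    simp
  set vtx : W := Sum.inr (Sum.inr 0) with hvtx
  set K : Set W := insert vtx Cset with hK
  have hvnotC : vtx ∉ Cset := by
    rintro ⟨c, hc⟩
    simp [hvtx] at hc
    cases hc
  have hKcard : K.ncard = k := by
    rw [hK, Set.ncard_insert_of_notMem hvnotC (Set.toFinite _), hCcard]
    omega
  -- K is inside the closed neighborhood of every clique vertex
  have hKsub_c : ∀ c : Fin (k-1), K ⊆ closedNbr (extGraph G k) (Sum.inr (Sum.inl c)) := by
    intro c z hz
    rcases hz with rfl | ⟨c', rfl⟩
    · exact Or.inr (ext_adj_cv (G := G) c)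
    · by_cases hcc : c = c'
      · exact Or.inl (by rw [hcc])
      · exact Or.inr (ext_adj_cc (G := G) hcc)
  have hKsub_v : K ⊆ closedNbr (extGraph G k) vtx := by
    intro z hz
    rcases hz with rfl | ⟨c', rfl⟩
    · exact Or.inl rfl
    · exact Or.inr ((ext_adj_cv (G := G) c').symm)
  have hCsub_inl : ∀ x : V, Cset ⊆ closedNbr (extGraph G k) (Sum.inl x) := by
    rintro x z ⟨c, rfl⟩
    exact Or.inr (ext_adj_inl_inr (G := G) x c)
  constructor
  · rintro ⟨D, hD, hDcard⟩
    refine ⟨Sum.inl '' D ∪ K, ?_, ?_⟩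
    · intro a b hab
      -- helper: if K ⊆ closed neighborhoods union, done
      have hfin : ((closedNbr (extGraph G k) a ∪ closedNbr (extGraph G k) b) ∩
          (Sum.inl '' D ∪ K)).Finite := Set.toFinite _
      have base : ∀ S : Set W, S ⊆ (closedNbr (extGraph G k) a ∪ closedNbr (extGraph G k) b) ∩
          (Sum.inl '' D ∪ K) → S.ncard = k →
          k ≤ ((closedNbr (extGraph G k) a ∪ closedNbr (extGraph G k) b) ∩
            (Sum.inl '' D ∪ K)).ncard := by
        intro S hS hScard
        calc k = S.ncard := hScard.symm
        _ ≤ _ := Set.ncard_le_ncard hS hfin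
      match a, b with
      | .inl x, .inl y =>
        have hxy : G.Adj x y := by
          rw [extGraph, SimpleGraph.fromRel_adj] at hab
          exact hab.2.elim id fun h => h.symm
        obtain ⟨d, hd⟩ : ((closedNbr G x ∪ closedNbr G y) ∩ D).Nonempty := by
          have := hD x y hxy
          exact Set.nonempty_of_ncard_ne_zero (by omega)
        refine base (insert (Sum.inl d) Cset) ?_ ?_
        · rintro z (rfl | hz)
          · constructor
            · rcases hd.1 with hd' | hd'
              · rcases hd' with rfl | hd'
                · exact Or.inl (Or.inl rfl)
                · exact Or.inl (Or.inr (ext_adj_inl_inl (k := k) hd'))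
              · rcases hd' with rfl | hd'
                · exact Or.inr (Or.inl rfl)
                · exact Or.inr (Or.inr (ext_adj_inl_inl (k := k) hd'))
            · exact Or.inl ⟨d, hd.2, rfl⟩
          · exact ⟨Or.inl (hCsub_inl x hz), Or.inr (Or.inr hz)⟩
        · rw [Set.ncard_insert_of_notMem (by rintro ⟨c, hc⟩; simp at hc) (Set.toFinite _),
            hCcard]
          omega
      | .inl x, .inr (.inl c) =>
        exact base K (fun z hz => ⟨Or.inr (hKsub_c c hz), Or.inr hz⟩) hKcard
      | .inr (.inl c), b =>
        exact base K (fun z hz => ⟨Or.inl (hKsub_c c hz), Or.inr hz⟩) hKcard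
      | .inr (.inr i), .inr (.inl c) =>
        exact base K (fun z hz => ⟨Or.inr (hKsub_c c hz), Or.inr hz⟩) hKcard
      | .inl x, .inr (.inr j) =>
        exact absurd (ext_adj_inr_inr hab.symm) (by simp)
      | .inr (.inr j), .inl x =>
        exact absurd (ext_adj_inr_inr hab) (by simp)
      | .inr (.inr i), .inr (.inr j) =>
        -- one of i, j is 0
        have h0 : i = 0 ∨ j = 0 := by
          rw [extGraph, SimpleGraph.fromRel_adj] at hab
          rcases hab.2 with ⟨h, -⟩ | ⟨h, -⟩
          · exact Or.inl h
          · exact Or.inr h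
        rcases h0 with rfl | rfl
        · exact base K (fun z hz => ⟨Or.inl (hKsub_v hz), Or.inr hz⟩) hKcard
        · exact base K (fun z hz => ⟨Or.inr (hKsub_v hz), Or.inr hz⟩) hKcard
    · calc (Sum.inl '' D ∪ K).ncard ≤ (Sum.inl '' D).ncard + K.ncard :=
            Set.ncard_union_le _ _
      _ ≤ t + k := by
          rw [hKcard, Set.ncard_image_of_injective _ Sum.inl_injective]
          omega
  · rintro ⟨D', hD', hDcard⟩
    refine ⟨Sum.inl ⁻¹' D', ?_, ?_⟩
    · intro x y hxy
      have hadj := ext_adj_inl_inl (G := G) (k := k) hxy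
      have hbig := hD' _ _ hadj
      set A := (closedNbr (extGraph G k) (Sum.inl x) ∪ closedNbr (extGraph G k) (Sum.inl y)) ∩ D'
        with hA
      have hAsub : A ⊆ (Sum.inl '' ((closedNbr G x ∪ closedNbr G y) ∩ (Sum.inl ⁻¹' D'))) ∪ Cset := by
        rintro z ⟨hz1, hz2⟩
        have : (∃ w, z = Sum.inl w ∧ w ∈ closedNbr G x ∪ closedNbr G y) ∨ z ∈ Cset := by
          rcases hz1 with hz1 | hz1
          · rcases hz1 with rfl | hz1
            · exact Or.inl ⟨x, rfl, Or.inl (Or.inl rfl)⟩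
            · rcases ext_adj_inl hz1 with ⟨w, rfl, hw⟩ | ⟨c, rfl⟩
              · exact Or.inl ⟨w, rfl, Or.inl (Or.inr hw)⟩
              · exact Or.inr ⟨c, rfl⟩
          · rcases hz1 with rfl | hz1
            · exact Or.inl ⟨y, rfl, Or.inr (Or.inl rfl)⟩
            · rcases ext_adj_inl hz1 with ⟨w, rfl, hw⟩ | ⟨c, rfl⟩
              · exact Or.inl ⟨w, rfl, Or.inr (Or.inr hw)⟩
              · exact Or.inr ⟨c, rfl⟩
        rcases this with ⟨w, rfl, hw⟩ | hc
        · exact Or.inl ⟨w, ⟨hw, hz2⟩, rfl⟩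
        · exact Or.inr hc
      have hchain : k ≤ ((Sum.inl '' ((closedNbr G x ∪ closedNbr G y) ∩ (Sum.inl ⁻¹' D'))
            : Set (V ⊕ (Fin (k-1) ⊕ Fin 2)))).ncard
          + (k - 1) := by
        calc k ≤ A.ncard := hbig
        _ ≤ (Sum.inl '' ((closedNbr G x ∪ closedNbr G y) ∩ (Sum.inl ⁻¹' D')) ∪ Cset).ncard :=
            Set.ncard_le_ncard hAsub (Set.toFinite _)
        _ ≤ (Sum.inl '' ((closedNbr G x ∪ closedNbr G y) ∩ (Sum.inl ⁻¹' D'))).ncard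
            + Cset.ncard := Set.ncard_union_le _ _
        _ = _ := by rw [hCcard]
      rw [Set.ncard_image_of_injective _ Sum.inl_injective] at hchain
      omega
    · have hsplit : D' = (D' ∩ Set.range Sum.inl) ∪ (D' ∩ Set.range Sum.inr) := by
        ext z
        match z with
        | .inl w => simp
        | .inr w => simp
      have hinr : k ≤ (D' ∩ Set.range Sum.inr).ncard := by
        have hbig := hD' _ _ (ext_adj_vu (G := G) (k := k))
        refine le_trans hbig (Set.ncard_le_ncard ?_ (Set.toFinite _))
        rintro z ⟨hz1, hz2⟩
        refine ⟨hz2, ?_⟩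
        rcases hz1 with hz1 | hz1
        · rcases hz1 with rfl | hz1
          · exact ⟨_, rfl⟩
          · exact ext_adj_inr_inr hz1
        · rcases hz1 with rfl | hz1
          · exact ⟨_, rfl⟩
          · exact ext_adj_inr_inr hz1
      have hdisj : Disjoint (D' ∩ Set.range Sum.inl) (D' ∩ Set.range Sum.inr) := by
        rw [Set.disjoint_iff]
        rintro z ⟨⟨-, w, rfl⟩, ⟨-, w', hw'⟩⟩
        simp at hw'
      have := Set.ncard_union_eq hdisj (Set.toFinite _) (Set.toFinite _)
      rw [← hsplit] at this
      have himg : (Sum.inl ⁻¹' D').ncard = (D' ∩ Set.range Sum.inl).ncard := by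
        rw [← Set.image_preimage_eq_inter_range,
          Set.ncard_image_of_injective _ Sum.inl_injective]
      omega
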